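/- Let x = (x₁,x₂) ∈ Z² with x₁, x₂ > 0. Every minimal contour γ ∈ Γ^{‖x‖}_{{0,x}} contains the four edges ⟨(-1,0),(0,0)⟩, ⟨(0,-1),(0,0)⟩, ⟨(x₁,x₂),(x₁,x₂+1)⟩ and ⟨(x₁,x₂),(x₁+1,x₂)⟩. -/

import Mathlib

open MeasureTheory Filter

/-- An edge of the square lattice `ℤ × ℤ`, encoded by its lower-left endpoint `base`
together with its direction: a horizontal edge joins `base` to `base + (1,0)`,
a vertical edge joins `base` to `base + (0,1)`. This encodes exactly the set
`𝔼` of nearest-neighbour edges of `ℤ²`. -/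
structure LatticeEdge where
  base : ℤ × ℤ
  horiz : Bool
deriving DecidableEq

namespace LatticeEdge

/-- First endpoint of an edge. -/
def fst (e : LatticeEdge) : ℤ × ℤ := e.base

/-- Second endpoint of an edge. -/
def snd (e : LatticeEdge) : ℤ × ℤ :=
  if e.horiz then (e.base.1 + 1, e.base.2) else (e.base.1, e.base.2 + 1)

/-- The two endpoints of an edge, as an unordered pair. -/
def ends (e : LatticeEdge) : Sym2 (ℤ × ℤ) := s(e.fst, e.snd)

end LatticeEdge

/-- The graph on `ℤ²` whose edges are the lattice edges belonging to `S`. -/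
def graphOf (S : Set LatticeEdge) : SimpleGraph (ℤ × ℤ) where
  Adj u v := u ≠ v ∧ ∃ e ∈ S, e.ends = s(u, v)
  symm := by
    constructor
    intro u v h
    obtain ⟨hne, e, he, hs⟩ := h
    exact ⟨hne.symm, e, he, hs.trans (Sym2.eq_swap)⟩
  loopless := by
    constructor
    intro u h
    exact h.1 rfl

/-- The graph `(ℤ², 𝔼 ∖ γ)` obtained by deleting the edges of `γ`. -/
def complGraph (γ : Finset LatticeEdge) : SimpleGraph (ℤ × ℤ) :=
  graphOf {e | e ∉ γ}

/-- A finite set `γ` of lattice edges is a *contour* if the graph `(ℤ², 𝔼 ∖ γ)` has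
exactly one finite connected component, and `γ` is minimal with this property:
for every `e ∈ γ`, the graph `(ℤ², 𝔼 ∖ (γ ∖ {e}))` has no finite connected component. -/
def IsContour (γ : Finset LatticeEdge) : Prop :=
  (∃! C : (complGraph γ).ConnectedComponent, C.supp.Finite) ∧
  ∀ e ∈ γ, ∀ C : (graphOf {f | f ∉ γ ∨ f = e}).ConnectedComponent, ¬ C.supp.Finite

/-- A contour `γ` *surrounds* a set `X ⊆ ℤ²` of vertices if `X` is contained in the
vertex set `I_γ` of the (unique) finite connected component of `(ℤ², 𝔼 ∖ γ)`. -/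
def Surrounds (γ : Finset LatticeEdge) (X : Set (ℤ × ℤ)) : Prop :=
  IsContour γ ∧ ∃ C : (complGraph γ).ConnectedComponent, C.supp.Finite ∧ X ⊆ C.supp

/-- `Γ^n_X` : the set of contours of cardinality `n` surrounding `X`. -/
def GammaN (X : Set (ℤ × ℤ)) (n : ℕ) : Set (Finset LatticeEdge) :=
  {γ | Surrounds γ X ∧ γ.card = n}

/-- `‖x‖ = 2(x₁ + x₂ + 2)`, the cardinality of a minimal contour surrounding `{0, x}`. -/
def normC (x : ℤ × ℤ) : ℕ := (2 * (x.1 + x.2 + 2)).toNat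

/-- `β_x` : the number of minimal contours surrounding `{0, x}`. -/
noncomputable def betaX (x : ℤ × ℤ) : ℕ := Nat.card ↥(GammaN {0, x} (normC x))

/-- Number of horizontal edges of `γ`, i.e. `|γ ∩ 𝔼ʰ|`. -/
def hCount (γ : Finset LatticeEdge) : ℕ := (γ.filter fun e => e.horiz = true).card

/-- Number of vertical edges of `γ`, i.e. `|γ ∩ 𝔼ᵛ|`. -/
def vCount (γ : Finset LatticeEdge) : ℕ := (γ.filter fun e => e.horiz = false).card

/-- The dual edge `e*` of a lattice edge `e`.  We identify the dual lattice
`ℤ² + (1/2, 1/2)` with `ℤ²` via `(a,b) ↦ (a + 1/2, b + 1/2)`; under this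
identification the dual edge crossing the horizontal edge `(a,b)–(a+1,b)` joins
`(a, b-1)` to `(a, b)` (a vertical dual edge), and the dual edge crossing the
vertical edge `(a,b)–(a,b+1)` joins `(a-1, b)` to `(a, b)` (a horizontal dual edge). -/
def dualEdge (e : LatticeEdge) : LatticeEdge :=
  if e.horiz then ⟨(e.base.1, e.base.2 - 1), false⟩ else ⟨(e.base.1 - 1, e.base.2), true⟩

/-- A finite set `S` of (dual) lattice edges is a *circuit* if it is the edge set of a
closed self-avoiding path: there are `n ≥ 3` distinct vertices `c 0, …, c (n-1)`,
cyclically consecutive ones being joined by an edge of `S`, and every edge of `S` arising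
this way. -/
def IsCircuit (S : Finset LatticeEdge) : Prop :=
  ∃ n : ℕ, 3 ≤ n ∧ ∃ c : ZMod n → ℤ × ℤ, Function.Injective c ∧
    (∀ i : ZMod n, ∃ e ∈ S, e.ends = s(c i, c (i + 1))) ∧
    (∀ e ∈ S, ∃ i : ZMod n, e.ends = s(c i, c (i + 1)))

/-- The dual edge `e_k*` joining `(k - 1/2, -1/2)` to `(k - 1/2, 1/2)`; in our
identification of the dual lattice with `ℤ²` this is the vertical dual edge with base
`(k-1, -1)`, i.e. the dual of the horizontal edge `(k-1, 0)–(k, 0)`. -/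
def ekStar (k : ℤ) : LatticeEdge := ⟨(k - 1, -1), false⟩

/-- The probability that the edge `e` is open: `p_h` for horizontal edges and `p_v`
for vertical ones. -/
noncomputable def edgeProb (ph pv : ℝ) (e : LatticeEdge) : ℝ := if e.horiz then ph else pv

/-- `P` is the Bernoulli product measure `P_{(p_h, p_v)}` on configurations
`ω ∈ {0,1}^𝔼` (encoded as `LatticeEdge → Bool`, `true` = open): it is a probability
measure and, for every finite set of edges, the states of those edges are independent
Bernoulli variables with the correct parameters.  These cylinder probabilities
characterize the product measure uniquely. -/
def IsBernoulliProduct (ph pv : ℝ) (P : Measure (LatticeEdge → Bool)) : Prop :=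
  IsProbabilityMeasure P ∧
    ∀ (F : Finset LatticeEdge) (σ : LatticeEdge → Bool),
      P {ω | ∀ e ∈ F, ω e = σ e} =
        ∏ e ∈ F, ENNReal.ofReal
          (if σ e then edgeProb ph pv e else 1 - edgeProb ph pv e)

/-- The graph of open edges of the configuration `ω`. -/
def openGraph (ω : LatticeEdge → Bool) : SimpleGraph (ℤ × ℤ) :=
  graphOf {e | ω e = true}

/-- `x` and `y` belong to the same finite open cluster of the configuration `ω`. -/
def SameFiniteCluster (ω : LatticeEdge → Bool) (x y : ℤ × ℤ) : Prop :=
  ∃ C : (openGraph ω).ConnectedComponent, x ∈ C.supp ∧ y ∈ C.supp ∧ C.supp.Finite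

/-- The truncated (finite) connectivity `τ^f_p(x,y)`: the probability that `x` and `y`
belong to the same finite open cluster. -/
noncomputable def tauF (P : Measure (LatticeEdge → Bool)) (x y : ℤ × ℤ) : ℝ :=
  (P {ω | SameFiniteCluster ω x y}).toReal

/-- The box `V_N = ([-N,N] × [-N,N]) ∩ ℤ²`. -/
def VN (N : ℕ) : Set (ℤ × ℤ) := {v | |v.1| ≤ (N : ℤ) ∧ |v.2| ≤ (N : ℤ)}

/-- The interior vertex boundary `∂_v^int V_N = {x ∈ V_N : d(x, ℤ² ∖ V_N) = 1}`. -/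
def intBdry (N : ℕ) : Set (ℤ × ℤ) :=
  {v | (|v.1| ≤ (N : ℤ) ∧ |v.2| ≤ (N : ℤ)) ∧ (|v.1| = (N : ℤ) ∨ |v.2| = (N : ℤ))}

/-- `e ∈ E_N`: both endpoints of `e` lie in `V_N`. -/
def edgeInBox (N : ℕ) (e : LatticeEdge) : Prop := e.fst ∈ VN N ∧ e.snd ∈ VN N

/-- The graph on `(V_N, open edges of E_N)` (vertices outside `V_N` are isolated). -/
def openGraphN (N : ℕ) (ω : LatticeEdge → Bool) : SimpleGraph (ℤ × ℤ) :=
  graphOf {e | edgeInBox N e ∧ ω e = true}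

/-- The finite-volume event defining `τ^{f,N}_p(x,y)`: there is an open cluster `A` of
`(V_N, open edges of E_N)` with `{x,y} ⊆ V_A` and `V_A ∩ ∂_v^int V_N = ∅`. -/
def FiniteVolEvent (N : ℕ) (x y : ℤ × ℤ) (ω : LatticeEdge → Bool) : Prop :=
  ∃ C : (openGraphN N ω).ConnectedComponent,
    x ∈ C.supp ∧ y ∈ C.supp ∧ C.supp ∩ intBdry N = ∅

/-- The finite-volume finite connectivity `τ^{f,N}_p(x,y)`. -/
noncomputable def tauFN (P : Measure (LatticeEdge → Bool)) (N : ℕ) (x y : ℤ × ℤ) : ℝ :=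
  (P {ω | FiniteVolEvent N x y ω}).toReal

/-- `λ = (1-p)/p`. -/
noncomputable def lam (p : ℝ) : ℝ := (1 - p) / p

/-- The threshold `η̃(p_h, x₁, x₂)` from the paper. -/
noncomputable def etaTilde (ph : ℝ) (x1 x2 : ℤ) : ℝ :=
  ((betaX (x1, x2) : ℝ) * ph ^ (4 * (x1 + x2 + 2)) /
      ((4 ^ 3 * lam ph) ^ (x1 + x2 + 3) / (1 - 4 ^ 3 * lam ph) +
        (betaX (x1, x2) : ℝ) * (1 + 12 * lam ph) ^ (2 * (x1 + x2 + 2)))) ^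
    (1 / (2 * ((x2 : ℝ) - (x1 : ℝ))))

namespace ContourAux

lemma fst_ne_snd (e : LatticeEdge) : e.fst ≠ e.snd := by
  rcases e with ⟨⟨a, b⟩, h⟩
  cases h <;> simp [LatticeEdge.fst, LatticeEdge.snd, Prod.ext_iff]

lemma ends_cases {e : LatticeEdge} {u v : ℤ × ℤ} (h : e.ends = s(u, v)) :
    (e.fst = u ∧ e.snd = v) ∨ (e.fst = v ∧ e.snd = u) := by
  rw [LatticeEdge.ends, Sym2.eq_iff] at h
  tauto

lemma adj_coord {S : Set LatticeEdge} {u v : ℤ × ℤ} (h : (graphOf S).Adj u v) :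
    v.1 ≤ u.1 + 1 ∧ u.1 ≤ v.1 + 1 ∧ v.2 ≤ u.2 + 1 ∧ u.2 ≤ v.2 + 1 := by
  obtain ⟨-, e, -, hs⟩ := h
  rcases ends_cases hs with ⟨ha, hb⟩ | ⟨ha, hb⟩ <;>
  · rcases e with ⟨⟨a, b⟩, hor⟩
    cases hor <;>
      simp only [LatticeEdge.fst, LatticeEdge.snd, if_true, if_false, Bool.false_eq_true] at ha hb <;>
      subst ha <;> subst hb <;> simp <;> omega

lemma walk_ivt_fst {S : Set LatticeEdge} {a b : ℤ × ℤ} (w : (graphOf S).Walk a b)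
    (t : ℤ) (h1 : a.1 ≤ t) (h2 : t ≤ b.1) : ∃ v ∈ w.support, v.1 = t := by
  induction w with
  | nil => exact ⟨_, by simp, le_antisymm h1 h2⟩
  | @cons u c b h w ih =>
    rcases eq_or_lt_of_le h1 with he | hlt
    · exact ⟨u, by simp, he⟩
    · have hc := adj_coord h
      obtain ⟨v, hv, hvt⟩ := ih (by omega) h2
      exact ⟨v, by simp [hv], hvt⟩

lemma walk_ivt_snd {S : Set LatticeEdge} {a b : ℤ × ℤ} (w : (graphOf S).Walk a b)
    (t : ℤ) (h1 : a.2 ≤ t) (h2 : t ≤ b.2) : ∃ v ∈ w.support, v.2 = t := by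
  induction w with
  | nil => exact ⟨_, by simp, le_antisymm h1 h2⟩
  | @cons u c b h w ih =>
    rcases eq_or_lt_of_le h1 with he | hlt
    · exact ⟨u, by simp, he⟩
    · have hc := adj_coord h
      obtain ⟨v, hv, hvt⟩ := ih (by omega) h2
      exact ⟨v, by simp [hv], hvt⟩

lemma support_subset_supp {V : Type*} {G : SimpleGraph V} {a b : V} (w : G.Walk a b)
    {C : G.ConnectedComponent} (ha : a ∈ C.supp) : ∀ v ∈ w.support, v ∈ C.supp := by
  induction w with
  | nil => intro v hv; simp at hv; subst hv; exact ha
  | @cons u c b h w ih =>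
    intro v hv
    rw [SimpleGraph.Walk.support_cons] at hv
    rcases List.mem_cons.mp hv with rfl | hv
    · exact ha
    · refine ih ?_ v hv
      rw [SimpleGraph.ConnectedComponent.mem_supp_iff] at ha ⊢
      rw [← ha]
      exact SimpleGraph.ConnectedComponent.eq.mpr h.symm.reachable

lemma not_mem_iff_cross {γ : Finset LatticeEdge} {C : (complGraph γ).ConnectedComponent}
    {e : LatticeEdge} (he : e ∉ γ) : e.fst ∈ C.supp ↔ e.snd ∈ C.supp := by
  have hadj : (complGraph γ).Adj e.fst e.snd := ⟨fst_ne_snd e, e, he, rfl⟩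
  simp only [SimpleGraph.ConnectedComponent.mem_supp_iff]
  rw [SimpleGraph.ConnectedComponent.eq.mpr hadj.reachable]

lemma mem_of_cross {γ : Finset LatticeEdge} {C : (complGraph γ).ConnectedComponent}
    {e : LatticeEdge} (h1 : e.fst ∈ C.supp) (h2 : e.snd ∉ C.supp) : e ∈ γ := by
  by_contra he
  exact h2 ((not_mem_iff_cross he).mp h1)

lemma mem_of_cross' {γ : Finset LatticeEdge} {C : (complGraph γ).ConnectedComponent}
    {e : LatticeEdge} (h1 : e.snd ∈ C.supp) (h2 : e.fst ∉ C.supp) : e ∈ γ := by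
  by_contra he
  exact h2 ((not_mem_iff_cross he).mpr h1)

/-- max of second coordinates in column `c`. -/
def ymaxE (Sf : Finset (ℤ × ℤ)) (c : ℤ) : ℤ :=
  WithBot.unbotD 0 (((Sf.filter (fun p => p.1 = c)).image Prod.snd).max)

def yminE (Sf : Finset (ℤ × ℤ)) (c : ℤ) : ℤ :=
  WithTop.untopD 0 (((Sf.filter (fun p => p.1 = c)).image Prod.snd).min)

def xmaxE (Sf : Finset (ℤ × ℤ)) (r : ℤ) : ℤ :=
  WithBot.unbotD 0 (((Sf.filter (fun p => p.2 = r)).image Prod.fst).max)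

def xminE (Sf : Finset (ℤ × ℤ)) (r : ℤ) : ℤ :=
  WithTop.untopD 0 (((Sf.filter (fun p => p.2 = r)).image Prod.fst).min)

lemma max_spec {s : Finset ℤ} (h : s.Nonempty) :
    WithBot.unbotD 0 s.max ∈ s ∧ ∀ y ∈ s, y ≤ WithBot.unbotD 0 s.max := by
  obtain ⟨m, hm⟩ := Finset.max_of_nonempty h
  have he : WithBot.unbotD 0 s.max = m := by rw [hm]; rfl
  rw [he]
  refine ⟨Finset.mem_of_max hm, fun y hy => ?_⟩
  have := Finset.le_max hy
  rw [hm] at this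
  exact_mod_cast this

lemma min_spec {s : Finset ℤ} (h : s.Nonempty) :
    WithTop.untopD 0 s.min ∈ s ∧ ∀ y ∈ s, WithTop.untopD 0 s.min ≤ y := by
  obtain ⟨m, hm⟩ := Finset.min_of_nonempty h
  have he : WithTop.untopD 0 s.min = m := by rw [hm]; rfl
  rw [he]
  refine ⟨Finset.mem_of_min hm, fun y hy => ?_⟩
  have := Finset.min_le hy
  rw [hm] at this
  exact_mod_cast this

lemma col_spec {Sf : Finset (ℤ × ℤ)} {c : ℤ} (h : c ∈ Sf.image Prod.fst) :
    (c, ymaxE Sf c) ∈ Sf ∧ (c, yminE Sf c) ∈ Sf ∧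
      ∀ p ∈ Sf, p.1 = c → yminE Sf c ≤ p.2 ∧ p.2 ≤ ymaxE Sf c := by
  obtain ⟨p, hp, hpc⟩ := Finset.mem_image.mp h
  have hne : ((Sf.filter (fun p => p.1 = c)).image Prod.snd).Nonempty :=
    ⟨p.2, Finset.mem_image.mpr ⟨p, Finset.mem_filter.mpr ⟨hp, hpc⟩, rfl⟩⟩
  obtain ⟨hmax, hle⟩ := max_spec hne
  obtain ⟨hmin, hge⟩ := min_spec hne
  obtain ⟨q, hq, hq2⟩ := Finset.mem_image.mp hmax
  obtain ⟨r, hr, hr2⟩ := Finset.mem_image.mp hmin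
  obtain ⟨hqS, hqc⟩ := Finset.mem_filter.mp hq
  obtain ⟨hrS, hrc⟩ := Finset.mem_filter.mp hr
  refine ⟨?_, ?_, fun u hu huc => ?_⟩
  · have : q = (c, ymaxE Sf c) := Prod.ext hqc hq2
    rwa [this] at hqS
  · have : r = (c, yminE Sf c) := Prod.ext hrc hr2
    rwa [this] at hrS
  · have hu2 : u.2 ∈ (Sf.filter (fun p => p.1 = c)).image Prod.snd :=
      Finset.mem_image.mpr ⟨u, Finset.mem_filter.mpr ⟨hu, huc⟩, rfl⟩
    exact ⟨hge _ hu2, hle _ hu2⟩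

lemma row_spec {Sf : Finset (ℤ × ℤ)} {r : ℤ} (h : r ∈ Sf.image Prod.snd) :
    (xmaxE Sf r, r) ∈ Sf ∧ (xminE Sf r, r) ∈ Sf ∧
      ∀ p ∈ Sf, p.2 = r → xminE Sf r ≤ p.1 ∧ p.1 ≤ xmaxE Sf r := by
  obtain ⟨p, hp, hpc⟩ := Finset.mem_image.mp h
  have hne : ((Sf.filter (fun p => p.2 = r)).image Prod.fst).Nonempty :=
    ⟨p.1, Finset.mem_image.mpr ⟨p, Finset.mem_filter.mpr ⟨hp, hpc⟩, rfl⟩⟩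
  obtain ⟨hmax, hle⟩ := max_spec hne
  obtain ⟨hmin, hge⟩ := min_spec hne
  obtain ⟨q, hq, hq2⟩ := Finset.mem_image.mp hmax
  obtain ⟨s, hs, hs2⟩ := Finset.mem_image.mp hmin
  obtain ⟨hqS, hqc⟩ := Finset.mem_filter.mp hq
  obtain ⟨hsS, hsc⟩ := Finset.mem_filter.mp hs
  refine ⟨?_, ?_, fun u hu huc => ?_⟩
  · have : q = (xmaxE Sf r, r) := Prod.ext hq2 hqc
    rwa [this] at hqS
  · have : s = (xminE Sf r, r) := Prod.ext hs2 hsc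
    rwa [this] at hsS
  · have hu2 : u.1 ∈ (Sf.filter (fun p => p.2 = r)).image Prod.fst :=
      Finset.mem_image.mpr ⟨u, Finset.mem_filter.mpr ⟨hu, huc⟩, rfl⟩
    exact ⟨hge _ hu2, hle _ hu2⟩

lemma fst_mk (p : ℤ × ℤ) (h : Bool) : (⟨p, h⟩ : LatticeEdge).fst = p := rfl

lemma snd_false (a b : ℤ) : (⟨(a, b), false⟩ : LatticeEdge).snd = (a, b + 1) := rfl

lemma snd_true (a b : ℤ) : (⟨(a, b), true⟩ : LatticeEdge).snd = (a + 1, b) := rfl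

end ContourAux

/-- For `x = (x₁,x₂)` with `x₁, x₂ > 0`, every minimal contour
surrounding `{0,x}` contains the four edges `⟨(-1,0),(0,0)⟩`, `⟨(0,-1),(0,0)⟩`,
`⟨(x₁,x₂),(x₁,x₂+1)⟩` and `⟨(x₁,x₂),(x₁+1,x₂)⟩`. -/
theorem minimal_contour_contains_corner_edges (x1 x2 : ℤ) (h1 : 0 < x1) (h2 : 0 < x2)
    (γ : Finset LatticeEdge) (hγ : γ ∈ GammaN {0, (x1, x2)} (normC (x1, x2))) :
    (⟨(-1, 0), true⟩ : LatticeEdge) ∈ γ ∧ (⟨(0, -1), false⟩ : LatticeEdge) ∈ γ ∧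
    (⟨(x1, x2), false⟩ : LatticeEdge) ∈ γ ∧ (⟨(x1, x2), true⟩ : LatticeEdge) ∈ γ := by
  classical
  open ContourAux in
  obtain ⟨⟨hcont, C, hCfin, hXC⟩, hcard⟩ := hγ
  set Sf : Finset (ℤ × ℤ) := hCfin.toFinset with hSfdef
  have hmemS : ∀ p : ℤ × ℤ, p ∈ Sf ↔ p ∈ C.supp := fun p => hCfin.mem_toFinset
  have h0 : ((0 : ℤ), (0 : ℤ)) ∈ C.supp := hXC (by left; rfl)
  have hx : ((x1, x2) : ℤ × ℤ) ∈ C.supp := hXC (by right; rfl)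
  have hreach : (complGraph γ).Reachable ((0 : ℤ), (0 : ℤ)) (x1, x2) := by
    rw [SimpleGraph.ConnectedComponent.mem_supp_iff] at h0 hx
    exact SimpleGraph.ConnectedComponent.eq.mp (h0.trans hx.symm)
  have h0' : ((0 : ℤ), (0 : ℤ)) ∈ C.supp := hXC (by left; rfl)
  obtain ⟨w⟩ := hreach
  set Cols := Sf.image Prod.fst with hColsdef
  set Rows := Sf.image Prod.snd with hRowsdef
  have hIccC : Finset.Icc (0 : ℤ) x1 ⊆ Cols := by
    intro t ht
    rw [Finset.mem_Icc] at ht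
    obtain ⟨v, hv, hvt⟩ := walk_ivt_fst w t ht.1 ht.2
    exact Finset.mem_image.mpr ⟨v, (hmemS v).mpr (support_subset_supp w h0' v hv), hvt⟩
  have hIccR : Finset.Icc (0 : ℤ) x2 ⊆ Rows := by
    intro t ht
    rw [Finset.mem_Icc] at ht
    obtain ⟨v, hv, hvt⟩ := walk_ivt_snd w t ht.1 ht.2
    exact Finset.mem_image.mpr ⟨v, (hmemS v).mpr (support_subset_supp w h0' v hv), hvt⟩
  -- the four families of boundary edges
  have hCup : ∀ c ∈ Cols, (⟨(c, ymaxE Sf c), false⟩ : LatticeEdge) ∈ γ := by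
    intro c hc
    obtain ⟨hmax, hmin, hbd⟩ := col_spec hc
    refine mem_of_cross (C := C) ?_ ?_
    · rw [fst_mk]; exact (hmemS _).mp hmax
    · rw [snd_false]
      intro hsnd
      have h2' := (hbd _ ((hmemS _).mpr hsnd) rfl).2
      simp only at h2'
      omega
  have hCdown : ∀ c ∈ Cols, (⟨(c, yminE Sf c - 1), false⟩ : LatticeEdge) ∈ γ := by
    intro c hc
    obtain ⟨hmax, hmin, hbd⟩ := col_spec hc
    refine mem_of_cross' (C := C) ?_ ?_
    · rw [snd_false]
      have he : yminE Sf c - 1 + 1 = yminE Sf c := by omega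
      rw [he]; exact (hmemS _).mp hmin
    · rw [fst_mk]
      intro hfst
      have h2' := (hbd _ ((hmemS _).mpr hfst) rfl).1
      simp only at h2'
      omega
  have hRright : ∀ r ∈ Rows, (⟨(xmaxE Sf r, r), true⟩ : LatticeEdge) ∈ γ := by
    intro r hr
    obtain ⟨hmax, hmin, hbd⟩ := row_spec hr
    refine mem_of_cross (C := C) ?_ ?_
    · rw [fst_mk]; exact (hmemS _).mp hmax
    · rw [snd_true]
      intro hsnd
      have h2' := (hbd _ ((hmemS _).mpr hsnd) rfl).2
      simp only at h2'
      omega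
  have hRleft : ∀ r ∈ Rows, (⟨(xminE Sf r - 1, r), true⟩ : LatticeEdge) ∈ γ := by
    intro r hr
    obtain ⟨hmax, hmin, hbd⟩ := row_spec hr
    refine mem_of_cross' (C := C) ?_ ?_
    · rw [snd_true]
      have he : xminE Sf r - 1 + 1 = xminE Sf r := by omega
      rw [he]; exact (hmemS _).mp hmin
    · rw [fst_mk]
      intro hfst
      have h2' := (hbd _ ((hmemS _).mpr hfst) rfl).1
      simp only at h2'
      omega
  -- counting
  have hsub :
      ((Cols.image (fun c => (⟨(c, ymaxE Sf c), false⟩ : LatticeEdge)) ∪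
          Cols.image (fun c => (⟨(c, yminE Sf c - 1), false⟩ : LatticeEdge))) ∪
        (Rows.image (fun r => (⟨(xmaxE Sf r, r), true⟩ : LatticeEdge)) ∪
          Rows.image (fun r => (⟨(xminE Sf r - 1, r), true⟩ : LatticeEdge)))) ⊆ γ := by
    refine Finset.union_subset (Finset.union_subset ?_ ?_) (Finset.union_subset ?_ ?_) <;>
      rw [Finset.image_subset_iff]
    · exact hCup
    · exact hCdown
    · exact hRright
    · exact hRleft
  have hc1 : (Cols.image (fun c => (⟨(c, ymaxE Sf c), false⟩ : LatticeEdge))).card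
      = Cols.card := Finset.card_image_of_injOn (fun a _ b _ h => by
        simpa using congrArg (fun e : LatticeEdge => e.base.1) h)
  have hc2 : (Cols.image (fun c => (⟨(c, yminE Sf c - 1), false⟩ : LatticeEdge))).card
      = Cols.card := Finset.card_image_of_injOn (fun a _ b _ h => by
        simpa using congrArg (fun e : LatticeEdge => e.base.1) h)
  have hc3 : (Rows.image (fun r => (⟨(xmaxE Sf r, r), true⟩ : LatticeEdge))).card
      = Rows.card := Finset.card_image_of_injOn (fun a _ b _ h => by
        simpa using congrArg (fun e : LatticeEdge => e.base.2) h)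
  have hc4 : (Rows.image (fun r => (⟨(xminE Sf r - 1, r), true⟩ : LatticeEdge))).card
      = Rows.card := Finset.card_image_of_injOn (fun a _ b _ h => by
        simpa using congrArg (fun e : LatticeEdge => e.base.2) h)
  have hd12 : Disjoint (Cols.image (fun c => (⟨(c, ymaxE Sf c), false⟩ : LatticeEdge)))
      (Cols.image (fun c => (⟨(c, yminE Sf c - 1), false⟩ : LatticeEdge))) := by
    rw [Finset.disjoint_left]
    rintro e he1 he2
    obtain ⟨a, ha, rfl⟩ := Finset.mem_image.mp he1
    obtain ⟨b, hb, heq⟩ := Finset.mem_image.mp he2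
    have h1' : b = a ∧ yminE Sf b - 1 = ymaxE Sf a := by
      have := congrArg (fun e : LatticeEdge => e.base) heq
      simpa [Prod.ext_iff] using this
    obtain ⟨rfl, h2'⟩ := h1'
    obtain ⟨hmax, hmin, hbd⟩ := col_spec ha
    have := (hbd _ hmax rfl).1
    simp only at this
    omega
  have hd34 : Disjoint (Rows.image (fun r => (⟨(xmaxE Sf r, r), true⟩ : LatticeEdge)))
      (Rows.image (fun r => (⟨(xminE Sf r - 1, r), true⟩ : LatticeEdge))) := by
    rw [Finset.disjoint_left]
    rintro e he1 he2
    obtain ⟨a, ha, rfl⟩ := Finset.mem_image.mp he1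
    obtain ⟨b, hb, heq⟩ := Finset.mem_image.mp he2
    have h1' : b = a ∧ xminE Sf b - 1 = xmaxE Sf a := by
      have := congrArg (fun e : LatticeEdge => e.base) heq
      simpa [Prod.ext_iff, and_comm] using this
    obtain ⟨rfl, h2'⟩ := h1'
    obtain ⟨hmax, hmin, hbd⟩ := row_spec ha
    have := (hbd _ hmax rfl).1
    simp only at this
    omega
  have hdVH : Disjoint ((Cols.image (fun c => (⟨(c, ymaxE Sf c), false⟩ : LatticeEdge)) ∪
          Cols.image (fun c => (⟨(c, yminE Sf c - 1), false⟩ : LatticeEdge))))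
      ((Rows.image (fun r => (⟨(xmaxE Sf r, r), true⟩ : LatticeEdge)) ∪
          Rows.image (fun r => (⟨(xminE Sf r - 1, r), true⟩ : LatticeEdge)))) := by
    rw [Finset.disjoint_left]
    rintro e he1 he2
    have hf : e.horiz = false := by
      rcases Finset.mem_union.mp he1 with h | h <;>
        · obtain ⟨a, -, rfl⟩ := Finset.mem_image.mp h
          rfl
    have ht : e.horiz = true := by
      rcases Finset.mem_union.mp he2 with h | h <;>
        · obtain ⟨a, -, rfl⟩ := Finset.mem_image.mp h
          rfl
    rw [hf] at ht
    exact Bool.false_ne_true ht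
  have hcount : 2 * Cols.card + 2 * Rows.card ≤ γ.card := by
    have := Finset.card_le_card hsub
    rwa [Finset.card_union_of_disjoint hdVH, Finset.card_union_of_disjoint hd12,
      Finset.card_union_of_disjoint hd34, hc1, hc2, hc3, hc4, ← two_mul, ← two_mul] at this
  have hγc : γ.card = (2 * (x1 + x2 + 2)).toNat := hcard
  have hCc := Finset.card_le_card hIccC
  have hRc := Finset.card_le_card hIccR
  rw [Int.card_Icc] at hCc hRc
  have hColsEq : Finset.Icc (0 : ℤ) x1 = Cols := by
    refine Finset.eq_of_subset_of_card_le hIccC ?_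
    rw [Int.card_Icc]
    omega
  have hRowsEq : Finset.Icc (0 : ℤ) x2 = Rows := by
    refine Finset.eq_of_subset_of_card_le hIccR ?_
    rw [Int.card_Icc]
    omega
  have hnmC : ∀ p : ℤ × ℤ, p ∈ C.supp → 0 ≤ p.1 ∧ p.1 ≤ x1 ∧ 0 ≤ p.2 ∧ p.2 ≤ x2 := by
    intro p hp
    have hpc : p.1 ∈ Cols := Finset.mem_image.mpr ⟨p, (hmemS p).mpr hp, rfl⟩
    have hpr : p.2 ∈ Rows := Finset.mem_image.mpr ⟨p, (hmemS p).mpr hp, rfl⟩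
    rw [← hColsEq, Finset.mem_Icc] at hpc
    rw [← hRowsEq, Finset.mem_Icc] at hpr
    exact ⟨hpc.1, hpc.2, hpr.1, hpr.2⟩
  refine ⟨?_, ?_, ?_, ?_⟩
  · refine mem_of_cross' (C := C) ?_ ?_
    · rw [snd_true]
      have he : ((-1 : ℤ) + 1, (0 : ℤ)) = ((0 : ℤ), (0 : ℤ)) := by norm_num
      rw [he]; exact h0'
    · rw [fst_mk]
      intro h
      have := hnmC _ h
      simp only at this
      omega
  · refine mem_of_cross' (C := C) ?_ ?_
    · rw [snd_false]
      have he : ((0 : ℤ), (-1 : ℤ) + 1) = ((0 : ℤ), (0 : ℤ)) := by norm_num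
      rw [he]; exact h0'
    · rw [fst_mk]
      intro h
      have := hnmC _ h
      simp only at this
      omega
  · refine mem_of_cross (C := C) ?_ ?_
    · rw [fst_mk]; exact hx
    · rw [snd_false]
      intro h
      have := hnmC _ h
      simp only at this
      omega
  · refine mem_of_cross (C := C) ?_ ?_
    · rw [fst_mk]; exact hx
    · rw [snd_true]
      intro h
      have := hnmC _ h
      simp only at this
      omega
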